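/- Fix an integer n ≥ 2 and let G = BS(1,n) be the subgroup of Homeo₊(ℝ) generated by a(x) = n·x and b(x) = x + 1. Let N be a normal subgroup of G with N ≠ {id}, and suppose the quotient group G/N is torsion-free. Then b ∈ N; moreover, if N ≠ G, then G/N is infinite cyclic. -/

import Mathlib

open Set Topology

/-- The group of self-homeomorphisms of `X`, with `(f * g) x = f (g x)`. -/
instance {X : Type*} [TopologicalSpace X] : Group (X ≃ₜ X) where
  mul f g := g.trans f
  one := Homeomorph.refl X
  inv := Homeomorph.symm
  mul_assoc _ _ _ := Homeomorph.ext fun _ => rfl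
  one_mul _ := Homeomorph.ext fun _ => rfl
  mul_one _ := Homeomorph.ext fun _ => rfl
  inv_mul_cancel f := Homeomorph.ext fun x => f.symm_apply_apply x

/-- The support of a homeomorphism: the closure of the set of non-fixed points. -/
def Supp (f : ℝ ≃ₜ ℝ) : Set ℝ := closure {x | f x ≠ x}

/-- The homeomorphism `x ↦ n·x` of `ℝ`. -/
noncomputable def dilation (n : ℕ) (hn : 2 ≤ n) : ℝ ≃ₜ ℝ :=
  Homeomorph.mulLeft₀ (n : ℝ) (by positivity)

/-- The homeomorphism `x ↦ x + t` of `ℝ`. -/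
noncomputable def translation (t : ℝ) : ℝ ≃ₜ ℝ := Homeomorph.addRight t

/-- The standard affine Baumslag–Solitar group `BS(1,n)`, generated by `x ↦ n·x`
and `x ↦ x + 1`, as a subgroup of the homeomorphism group of `ℝ`. -/
noncomputable def BSgroup (n : ℕ) (hn : 2 ≤ n) : Subgroup (ℝ ≃ₜ ℝ) :=
  Subgroup.closure {dilation n hn, translation 1}

/-- A monoid is torsion-free if its only element of finite order is the identity
(the definition `Monoid.IsTorsionFree` of the older Mathlib, since removed). -/
def Monoid.IsTorsionFree (G : Type*) [Monoid G] : Prop :=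
  ∀ g : G, g ≠ 1 → ¬IsOfFinOrder g

/-! ### Auxiliary lemmas -/

lemma hmul_apply (f g : ℝ ≃ₜ ℝ) (x : ℝ) : (f * g) x = f (g x) := rfl
lemma hinv_apply (f : ℝ ≃ₜ ℝ) (x : ℝ) : (f⁻¹) x = f.symm x := rfl
lemma hone_apply (x : ℝ) : (1 : ℝ ≃ₜ ℝ) x = x := rfl
lemma dilation_apply (n : ℕ) (hn : 2 ≤ n) (x : ℝ) : dilation n hn x = n * x := rfl
lemma translation_apply (t x : ℝ) : translation t x = x + t := rfl

/-- membership in `ℤ[1/n]`. -/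
def Dy (n : ℕ) (t : ℝ) : Prop := ∃ (s : ℤ) (j : ℕ), t = s / (n : ℝ) ^ j

section arith
variable {n : ℕ} (hn : 2 ≤ n)
include hn

lemma npos : (0 : ℝ) < n := by
  have : 0 < n := lt_of_lt_of_le Nat.zero_lt_two hn
  exact_mod_cast this

lemma nne : (n : ℝ) ≠ 0 := ne_of_gt (npos hn)

lemma Dy_add {t u : ℝ} (ht : Dy n t) (hu : Dy n u) : Dy n (t + u) := by
  obtain ⟨s1, j1, rfl⟩ := ht
  obtain ⟨s2, j2, rfl⟩ := hu
  refine ⟨s1 * n ^ j2 + s2 * n ^ j1, j1 + j2, ?_⟩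
  have h := nne hn
  rw [div_add_div _ _ (pow_ne_zero j1 h) (pow_ne_zero j2 h), pow_add]
  push_cast
  ring

omit hn in
lemma Dy_neg {t : ℝ} (ht : Dy n t) : Dy n (-t) := by
  obtain ⟨s, j, rfl⟩ := ht
  exact ⟨-s, j, by push_cast; ring⟩

lemma Dy_zpow_mul (k : ℤ) {t : ℝ} (ht : Dy n t) : Dy n ((n : ℝ) ^ k * t) := by
  have h := nne hn
  induction k using Int.induction_on with
  | zero => simpa using ht
  | succ m ih =>
    obtain ⟨s, j, hsj⟩ := ih
    refine ⟨n * s, j, ?_⟩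
    rw [zpow_add₀ h, zpow_one, mul_comm ((n:ℝ)^(m:ℤ)) (n:ℝ), mul_assoc, hsj]
    push_cast; ring
  | pred m ih =>
    obtain ⟨s, j, hsj⟩ := ih
    refine ⟨s, j + 1, ?_⟩
    rw [show (-(m:ℤ) - 1) = (-1) + (-(m:ℤ)) by ring, zpow_add₀ h, mul_assoc, zpow_neg_one,
      hsj, pow_succ]
    field_simp [mul_comm]

end arith


lemma translation_mul (t u : ℝ) : translation t * translation u = translation (t + u) :=
  Homeomorph.ext fun x => by
    rw [hmul_apply, translation_apply, translation_apply, translation_apply]; ring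

lemma translation_inv (t : ℝ) : (translation t)⁻¹ = translation (-t) := by
  rw [eq_comm, eq_inv_iff_mul_eq_one, translation_mul]
  exact Homeomorph.ext fun x => by rw [translation_apply, hone_apply]; ring

lemma translation_pow (t : ℝ) (m : ℕ) : (translation t) ^ m = translation (m * t) := by
  induction m with
  | zero =>
    refine (pow_zero _).trans (Homeomorph.ext fun x => ?_)
    rw [hone_apply, translation_apply]; push_cast; ring
  | succ m ih =>
    rw [pow_succ, ih, translation_mul]
    congr 1
    push_cast; ring

lemma translation_zpow (t : ℝ) (k : ℤ) : (translation t) ^ k = translation (k * t) := by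
  rcases k with m | m
  · show (translation t) ^ (m : ℤ) = _
    rw [zpow_natCast, translation_pow]; norm_num
  · rw [zpow_negSucc, translation_pow, translation_inv]
    congr 1
    push_cast; ring

section affine
variable {n : ℕ} (hn : 2 ≤ n)
include hn

lemma dil_pow_apply (j : ℕ) (x : ℝ) : ((dilation n hn) ^ j) x = (n : ℝ) ^ j * x := by
  induction j generalizing x with
  | zero => rw [pow_zero, hone_apply, pow_zero, one_mul]
  | succ j ih =>
    rw [pow_succ, hmul_apply, ih, dilation_apply, pow_succ]
    ring

lemma BS_affine {g : ℝ ≃ₜ ℝ} (hg : g ∈ BSgroup n hn) :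
    ∃ (k : ℤ) (t : ℝ), Dy n t ∧ ∀ x, g x = (n : ℝ) ^ k * x + t := by
  have hne := nne hn
  induction hg using Subgroup.closure_induction with
  | mem f hf =>
    rcases hf with hf | hf
    · exact ⟨1, 0, ⟨0, 0, by norm_num⟩, fun x => by
        rw [hf, dilation_apply, zpow_one, add_zero]⟩
    · exact ⟨0, 1, ⟨1, 0, by norm_num⟩, fun x => by
        simp only [Set.mem_singleton_iff] at hf
        rw [hf, translation_apply, zpow_zero, one_mul]⟩
  | one => exact ⟨0, 0, ⟨0, 0, by norm_num⟩, fun x => by rw [hone_apply, zpow_zero]; ring⟩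
  | mul f g hf hg ihf ihg =>
    obtain ⟨k1, t1, d1, h1⟩ := ihf
    obtain ⟨k2, t2, d2, h2⟩ := ihg
    refine ⟨k1 + k2, (n : ℝ) ^ k1 * t2 + t1, Dy_add hn (Dy_zpow_mul hn k1 d2) d1, fun x => ?_⟩
    rw [hmul_apply, h2, h1, zpow_add₀ hne]
    ring
  | inv f hf ihf =>
    obtain ⟨k, t, d, h⟩ := ihf
    refine ⟨-k, -((n : ℝ) ^ (-k) * t), Dy_neg (Dy_zpow_mul hn (-k) d), fun y => ?_⟩
    have hy : (n : ℝ) ^ k * (f.symm y) + t = y := by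
      rw [← h (f.symm y)]; exact f.apply_symm_apply y
    rw [hinv_apply]
    have hk : ((n : ℝ) ^ k) ≠ 0 := zpow_ne_zero _ hne
    have : (n : ℝ) ^ (-k) = ((n : ℝ) ^ k)⁻¹ := zpow_neg _ _
    rw [this]
    field_simp
    linarith [hy]

end affine

theorem BS_torsion_free_quotients
    (n : ℕ) (hn : 2 ≤ n)
    (N : Subgroup ↥(BSgroup n hn)) [hN : N.Normal]
    (hbot : N ≠ ⊥)
    (htf : Monoid.IsTorsionFree (↥(BSgroup n hn) ⧸ N)) :
    (⟨translation 1, Subgroup.subset_closure (Set.mem_insert_of_mem _ rfl)⟩ :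
        ↥(BSgroup n hn)) ∈ N ∧
      (N ≠ ⊤ → Nonempty ((↥(BSgroup n hn) ⧸ N) ≃* Multiplicative ℤ)) := by
  classical
  have hne := nne hn
  set A : ↥(BSgroup n hn) :=
    ⟨dilation n hn, Subgroup.subset_closure (Set.mem_insert _ _)⟩ with hA
  set B : ↥(BSgroup n hn) :=
    ⟨translation 1, Subgroup.subset_closure (Set.mem_insert_of_mem _ rfl)⟩ with hB
  -- torsion-freeness of the quotient kills elements with a nontrivial root of 1
  have torsion_kill : ∀ (q : ↥(BSgroup n hn) ⧸ N) (s : ℤ), s ≠ 0 → q ^ s = 1 → q = 1 := by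
    intro q s hs hq
    by_contra hq1
    refine htf q hq1 (isOfFinOrder_iff_pow_eq_one.mpr
      ⟨s.natAbs, Int.natAbs_pos.mpr hs, ?_⟩)
    have hz : q ^ (s.natAbs : ℤ) = 1 := by
      rcases Int.natAbs_eq s with he | he
      · rw [← he, hq]
      · have h2 : (s.natAbs : ℤ) = -s := by omega
        rw [h2, zpow_neg, hq, inv_one]
    rw [← zpow_natCast]; exact hz
  -- if N contains a nontrivial dyadic translation, then B ∈ N
  have key : ∀ h : ↥(BSgroup n hn), h ∈ N → ∀ (s : ℤ) (j : ℕ), s ≠ 0 →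
      (∀ x, (h : ℝ ≃ₜ ℝ) x = x + (s : ℝ) / (n : ℝ) ^ j) → B ∈ N := by
    intro h hmem s j hs hfun
    have hHmem : A ^ j * h * (A ^ j)⁻¹ ∈ N := hN.conj_mem h hmem (A ^ j)
    have hHeq : A ^ j * h * (A ^ j)⁻¹ = B ^ s := by
      apply Subtype.ext
      have hc1 : ((A ^ j * h * (A ^ j)⁻¹ : ↥(BSgroup n hn)) : ℝ ≃ₜ ℝ)
          = (dilation n hn) ^ j * (h : ℝ ≃ₜ ℝ) * ((dilation n hn) ^ j)⁻¹ := by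
        push_cast; rfl
      have hc2 : ((B ^ s : ↥(BSgroup n hn)) : ℝ ≃ₜ ℝ) = translation s := by
        rw [SubgroupClass.coe_zpow]
        show (translation 1) ^ s = _
        rw [translation_zpow]; norm_num
      rw [hc1, hc2]
      refine Homeomorph.ext fun x => ?_
      rw [hmul_apply, hmul_apply, hinv_apply, translation_apply, hfun, dil_pow_apply hn]
      have hy := (dilation n hn ^ j).apply_symm_apply x
      rw [dil_pow_apply hn] at hy
      have hns : ((n : ℝ) ^ j) ≠ 0 := pow_ne_zero _ hne
      have hd : (n : ℝ) ^ j * ((s : ℝ) / (n : ℝ) ^ j) = s := by field_simp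
      rw [mul_add, hy, hd]
    have hBs : B ^ s ∈ N := hHeq ▸ hHmem
    have hq : (B : ↥(BSgroup n hn) ⧸ N) ^ s = 1 := by
      rw [← QuotientGroup.mk_zpow]
      exact (QuotientGroup.eq_one_iff _).mpr hBs
    exact (QuotientGroup.eq_one_iff _).mp (torsion_kill _ s hs hq)
  -- get a nontrivial element of N and produce a nontrivial translation in N
  obtain ⟨⟨g, hgN⟩, hg1⟩ := Subgroup.ne_bot_iff_exists_ne_one.mp hbot
  have hg1' : g ≠ 1 := fun h => hg1 (Subtype.ext h)
  obtain ⟨k, t, dt, hfun⟩ := BS_affine hn g.2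
  have hBN : B ∈ N := by
    rcases eq_or_ne k 0 with hk | hk
    · -- g is itself a translation
      obtain ⟨s, j, rfl⟩ := dt
      have hs : s ≠ 0 := by
        rintro rfl
        refine hg1' (Subtype.ext (Homeomorph.ext fun x => ?_))
        rw [hfun x, hk, zpow_zero]
        show _ = (1 : ℝ ≃ₜ ℝ) x
        rw [hone_apply]; norm_num
      exact key g hgN s j hs fun x => by rw [hfun x, hk, zpow_zero, one_mul]
    · -- the commutator of g with B is a nontrivial translation
      have hn1 : (n : ℝ) ≠ 1 := by
        have h2 : (2 : ℝ) ≤ n := by exact_mod_cast hn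
        linarith
      have hc1 : (n : ℝ) ^ k ≠ 1 := fun hc =>
        hk (zpow_right_injective₀ (npos hn) hn1 (by simpa using hc))
      have hDy : Dy n ((n : ℝ) ^ k - 1) := by
        have h' : (n : ℝ) ^ k - 1 = (n : ℝ) ^ k * 1 + (-1) := by ring
        rw [h']
        exact Dy_add hn (Dy_zpow_mul hn k ⟨1, 0, by norm_num⟩) ⟨-1, 0, by norm_num⟩
      obtain ⟨s, j, hsj⟩ := hDy
      have hs : s ≠ 0 := by
        rintro rfl
        apply hc1
        have : (n : ℝ) ^ k - 1 = 0 := by rw [hsj]; norm_num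
        linarith
      have hmem2 : g * (B * g⁻¹ * B⁻¹) ∈ N :=
        N.mul_mem hgN (hN.conj_mem _ (N.inv_mem hgN) B)
      refine key _ hmem2 s j hs fun x => ?_
      show (g : ℝ ≃ₜ ℝ) ((translation 1) ((g : ℝ ≃ₜ ℝ).symm ((translation 1).symm x)))
          = x + (s : ℝ) / (n : ℝ) ^ j
      have e1 : (translation 1).symm x = x - 1 := by
        rw [← hinv_apply, translation_inv, translation_apply]; ring
      rw [e1, translation_apply]
      have hz : (n : ℝ) ^ k * ((g : ℝ ≃ₜ ℝ).symm (x - 1)) + t = x - 1 := by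
        rw [← hfun]; exact (g : ℝ ≃ₜ ℝ).apply_symm_apply (x - 1)
      rw [hfun]
      have hexp : (n : ℝ) ^ k * ((g : ℝ ≃ₜ ℝ).symm (x - 1) + 1) + t
          = ((n : ℝ) ^ k * ((g : ℝ ≃ₜ ℝ).symm (x - 1)) + t) + (n : ℝ) ^ k := by ring
      rw [hexp, hz]
      linarith [hsj.symm]
  refine ⟨hBN, fun htop => ?_⟩
  -- part 2 : the quotient is infinite cyclic
  have hmkB : (B : ↥(BSgroup n hn) ⧸ N) = 1 := (QuotientGroup.eq_one_iff _).mpr hBN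
  have hpre : ∀ x : ↥(BSgroup n hn),
      (x : ℝ ≃ₜ ℝ) ∈ ({dilation n hn, translation 1} : Set (ℝ ≃ₜ ℝ)) → x = A ∨ x = B := by
    intro x hx
    rcases hx with hx | hx
    · exact Or.inl (Subtype.ext hx)
    · exact Or.inr (Subtype.ext hx)
  have htopgen : (⊤ : Subgroup ↥(BSgroup n hn)) = Subgroup.closure
      (((↑) : ↥(BSgroup n hn) → ℝ ≃ₜ ℝ) ⁻¹' {dilation n hn, translation 1}) :=
    (Subgroup.closure_closure_coe_preimage).symm
  have hgen : ∀ g : ↥(BSgroup n hn),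
      (g : ↥(BSgroup n hn) ⧸ N) ∈ Subgroup.zpowers (A : ↥(BSgroup n hn) ⧸ N) := by
    intro g
    have hg : g ∈ Subgroup.closure
        (((↑) : ↥(BSgroup n hn) → ℝ ≃ₜ ℝ) ⁻¹' {dilation n hn, translation 1}) :=
      htopgen ▸ Subgroup.mem_top g
    induction hg using Subgroup.closure_induction with
    | mem x hx =>
      rcases hpre x hx with rfl | rfl
      · exact Subgroup.mem_zpowers _
      · rw [hmkB]; exact Subgroup.one_mem _
    | one => rw [QuotientGroup.mk_one]; exact Subgroup.one_mem _
    | mul x y hx hy ihx ihy => rw [QuotientGroup.mk_mul]; exact Subgroup.mul_mem _ ihx ihy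
    | inv x hx ihx => rw [QuotientGroup.mk_inv]; exact Subgroup.inv_mem _ ihx
  have hAnotN : A ∉ N := by
    intro hAN
    apply htop
    rw [eq_top_iff, htopgen]
    refine (Subgroup.closure_le N).mpr fun x hx => ?_
    rcases hpre x hx with rfl | rfl
    exacts [hAN, hBN]
  set f : Multiplicative ℤ →* (↥(BSgroup n hn) ⧸ N) :=
    zpowersHom _ (A : ↥(BSgroup n hn) ⧸ N) with hf
  have hinj : Function.Injective f := by
    rw [injective_iff_map_eq_one]
    intro m hm
    have hm' : (A : ↥(BSgroup n hn) ⧸ N) ^ (Multiplicative.toAdd m) = 1 := hm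
    rcases eq_or_ne (Multiplicative.toAdd m) 0 with h0 | h0
    · have : Multiplicative.toAdd m = Multiplicative.toAdd (1 : Multiplicative ℤ) := h0
      exact Multiplicative.toAdd.injective this
    · exact absurd ((QuotientGroup.eq_one_iff _).mp (torsion_kill _ _ h0 hm')) hAnotN
  have hsurj : Function.Surjective f := by
    intro q
    obtain ⟨g, rfl⟩ := QuotientGroup.mk_surjective q
    obtain ⟨m, hm⟩ := Subgroup.mem_zpowers_iff.mp (hgen g)
    exact ⟨Multiplicative.ofAdd m, hm⟩
  exact ⟨(MulEquiv.ofBijective f ⟨hinj, hsurj⟩).symm⟩
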